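/- Let σ : ℝ≥0 → ℝ be absolutely continuous and suppose that for almost every t ≥ 0 its derivative satisfies σ'(t) ∈ b·(d(t) − (K/b)·sign(σ(t))) for some constant b ≠ 0, a measurable disturbance d with |d(t)| ≤ K_d, and K > |b|·K_d. Then for almost every t, (1/2)·d/dt |σ(t)|² ≤ −(K − |b|·K_d)·|σ(t)|. -/

import Mathlib

open MeasureTheory

/-- The set-valued sign function: `{s/|s|}` if `s ≠ 0`, `[-1,1]` if `s = 0`. -/
def signSet (s : ℝ) : Set ℝ := if s = 0 then Set.Icc (-1 : ℝ) 1 else {s / |s|}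

/-- Sliding-mode reaching inequality: if a.e. `σ'(t) = b·d(t) − K·w(t)` with
`w(t) ∈ sign(σ(t))`, `|d| ≤ K_d`, and `K > |b|·K_d`, then
`(1/2)·(d/dt)|σ(t)|² ≤ −(K − |b|·K_d)·|σ(t)|` a.e. on `t ≥ 0`. -/
theorem stmt0 (σ σ' d w : ℝ → ℝ) (b K K_d : ℝ)
    (hb : b ≠ 0) (hKd : 0 ≤ K_d) (hK : K > |b| * K_d)
    (hd_meas : Measurable d) (hw_meas : Measurable w)
    (hd : ∀ t, 0 ≤ t → |d t| ≤ K_d)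
    (hderiv : ∀ᵐ t : ℝ, 0 ≤ t → HasDerivAt σ (σ' t) t)
    (hsel : ∀ᵐ t : ℝ, 0 ≤ t → w t ∈ signSet (σ t) ∧ σ' t = b * d t - K * w t) :
    ∀ᵐ t : ℝ, 0 ≤ t → (1 / 2) * deriv (fun s => |σ s| ^ 2) t ≤ -(K - |b| * K_d) * |σ t| := by
  filter_upwards [hderiv, hsel] with t h1 h2 ht
  obtain ⟨hw, heq⟩ := h2 ht
  have h1 := h1 ht
  have hfe : (fun s => |σ s| ^ 2) = fun s => σ s ^ 2 := by
    funext s; rw [sq_abs]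
  have hderiv2 : HasDerivAt (fun s => σ s ^ 2) (2 * σ t * σ' t) t := by
    simpa [mul_comm, mul_assoc, mul_left_comm] using h1.fun_pow 2
  have hd2 : deriv (fun s => |σ s| ^ 2) t = 2 * σ t * σ' t := by
    rw [hfe]; exact hderiv2.deriv
  rw [hd2]
  have hwσ : σ t * w t = |σ t| := by
    by_cases h : σ t = 0
    · simp [h]
    · have : w t = σ t / |σ t| := by simpa [signSet, h] using hw
      rw [this]
      field_simp [abs_ne_zero.mpr h]
      exact (sq_abs _).symm

  have hσd : σ t * d t ≤ |σ t| * K_d := by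
    calc σ t * d t ≤ |σ t * d t| := le_abs_self _
    _ = |σ t| * |d t| := abs_mul _ _
    _ ≤ |σ t| * K_d := by
        exact mul_le_mul_of_nonneg_left (hd t ht) (abs_nonneg _)
  have hbK : b * (σ t * d t) ≤ |b| * (|σ t| * K_d) := by
    calc b * (σ t * d t) ≤ |b * (σ t * d t)| := le_abs_self _
    _ = |b| * (|σ t| * |d t|) := by rw [abs_mul, abs_mul]
    _ ≤ |b| * (|σ t| * K_d) :=
        mul_le_mul_of_nonneg_left
          (mul_le_mul_of_nonneg_left (hd t ht) (abs_nonneg _)) (abs_nonneg _)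
  have : σ t * σ' t ≤ -(K - |b| * K_d) * |σ t| := by
    rw [heq]
    have : σ t * (b * d t - K * w t) = b * (σ t * d t) - K * (σ t * w t) := by ring
    rw [this, hwσ]
    nlinarith [abs_nonneg (σ t)]
  linarith
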